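/- Let α, α' ∈ ℝ with α ≠ α', set 𝒜 = α' − α and I_p = {iy : y ∈ ℝ, |y| > 1/|𝒜|}, and define B_p(w) = (α+α')/2 + (1 + √(𝒜²w² + 1))/(2w) for w ∈ ℂ ∖ (I_p ∪ {0}). If (g_k) is a sequence in ℂ ∖ (I_p ∪ {0}) with |g_k| → ∞ and B_p(g_k) → z for some z ∈ ℂ, then z = α or z = α'. -/

import Mathlib

open Filter

theorem stmt17 (α α' : ℝ) (hαα : α ≠ α')
    (𝒜 : ℝ) (h𝒜 : 𝒜 = α' - α)
    (Ip : Set ℂ) (hIp : Ip = {w : ℂ | w.re = 0 ∧ 1 / |𝒜| < |w.im|})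
    (Bp : ℂ → ℂ)
    (hBp : ∀ w : ℂ, Bp w = (((α + α') / 2 : ℝ) : ℂ) +
      (1 + ((𝒜 : ℂ) ^ 2 * w ^ 2 + 1) ^ ((1 : ℂ) / 2)) / (2 * w))
    (g : ℕ → ℂ) (hgdom : ∀ j, g j ∉ Ip ∧ g j ≠ 0)
    (hginf : Tendsto (fun j => ‖g j‖) atTop atTop)
    (z : ℂ) (hz : Tendsto (fun j => Bp (g j)) atTop (nhds z)) :
    z = (α : ℂ) ∨ z = (α' : ℂ) := by
  set c : ℂ := (((α + α') / 2 : ℝ) : ℂ) with hc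
  set f : ℕ → ℂ := fun j => Bp (g j) - c with hf
  set u : ℂ := z - c with hu
  have hfu : Tendsto f atTop (nhds u) := hz.sub_const c
  -- 1/g → 0
  have hginv : Tendsto (fun j => (g j)⁻¹) atTop (nhds 0) := by
    rw [tendsto_zero_iff_norm_tendsto_zero]
    have : Tendsto (fun j => (‖g j‖)⁻¹) atTop (nhds 0) :=
      tendsto_inv_atTop_zero.comp hginf
    simpa using this
  -- the key identity
  have key : ∀ j, 4 * (f j) ^ 2 - 4 * (f j) * (g j)⁻¹ = ((𝒜 : ℂ)) ^ 2 := by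
    intro j
    have hg0 : g j ≠ 0 := (hgdom j).2
    set s : ℂ := ((𝒜 : ℂ) ^ 2 * (g j) ^ 2 + 1) ^ ((1 : ℂ) / 2) with hs
    have hs2 : s ^ 2 = (𝒜 : ℂ) ^ 2 * (g j) ^ 2 + 1 := by
      have := Complex.cpow_nat_inv_pow ((𝒜 : ℂ) ^ 2 * (g j) ^ 2 + 1) (n := 2) (by norm_num)
      simp only [hs, one_div]; exact_mod_cast this
    have hfj : f j = (1 + s) / (2 * g j) := by
      simp [hf, hBp (g j), hc, hs]
    rw [hfj]
    field_simp
    linear_combination 4 * hs2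
  have hlim2 : Tendsto (fun j => 4 * (f j) ^ 2 - 4 * (f j) * (g j)⁻¹) atTop
      (nhds (4 * u ^ 2 - 4 * u * 0)) :=
    ((tendsto_const_nhds.mul (hfu.pow 2)).sub ((tendsto_const_nhds.mul hfu).mul hginv))
  have hconst : Tendsto (fun j => 4 * (f j) ^ 2 - 4 * (f j) * (g j)⁻¹) atTop
      (nhds (((𝒜 : ℂ)) ^ 2)) := by
    simp only [key]; exact tendsto_const_nhds
  have heq : 4 * u ^ 2 - 4 * u * 0 = ((𝒜 : ℂ)) ^ 2 := tendsto_nhds_unique hlim2 hconst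
  have h4 : 4 * u ^ 2 = ((𝒜 : ℂ)) ^ 2 := by linear_combination heq
  have hfac : (u - (𝒜 : ℂ) / 2) * (u + (𝒜 : ℂ) / 2) = 0 := by
    have : 4 * u ^ 2 = ((𝒜 : ℂ)) ^ 2 := by rw [← heq]; ring
    linear_combination (1/4 : ℂ) * this
  rcases mul_eq_zero.1 hfac with h | h
  · right
    have hu' : u = (𝒜 : ℂ) / 2 := by linear_combination h
    have : z = c + (𝒜 : ℂ) / 2 := by rw [← hu']; simp [hu]
    rw [this, hc, h𝒜]
    push_cast
    ring
  · left
    have hu' : u = -((𝒜 : ℂ) / 2) := by linear_combination h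
    have : z = c - (𝒜 : ℂ) / 2 := by rw [hu'] at hu; linear_combination -hu
    rw [this, hc, h𝒜]
    push_cast
    ring
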